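/- arXiv:2202.05077 — 5 statements merged into one kernel-verified Lean document; each statement's English description precedes it below -/
import Mathlib

section
/- For every nonnegative integer k one has C(-1/3,k) * C(-2/3,k) = C(2k,k)*C(3k,k)/27^k, where C(x,k) denotes the generalized binomial coefficient. -/
/-- Generalized binomial coefficient `C(x, k) = x(x-1)⋯(x-k+1)/k!` for rational `x`. -/
def gbc (x : ℚ) (k : ℕ) : ℚ :=
  (∏ i ∈ Finset.range k, (x - i)) / (Nat.factorial k)

lemma aux3 (k : ℕ) :
    (∏ i ∈ Finset.range k, ((-1/3 : ℚ) - i)) * (∏ i ∈ Finset.range k, ((-2/3 : ℚ) - i))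
      * 27 ^ k * (Nat.factorial k : ℚ) = (Nat.factorial (3 * k) : ℚ) := by
  induction k with
  | zero => simp
  | succ n ih =>
    rw [Finset.prod_range_succ, Finset.prod_range_succ]
    have h3 : 3 * (n + 1) = 3 * n + 1 + 1 + 1 := by ring
    rw [h3, Nat.factorial_succ, Nat.factorial_succ, Nat.factorial_succ, Nat.factorial_succ]
    push_cast
    rw [← ih]
    ring

theorem stmt3 (k : ℕ) :
    gbc (-1/3) k * gbc (-2/3) k =
      (Nat.choose (2 * k) k) * (Nat.choose (3 * k) k) / (27 : ℚ) ^ k := by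
  have h1 : (Nat.choose (2 * k) k : ℚ) =
      (Nat.factorial (2 * k) : ℚ) / ((Nat.factorial k : ℚ) * (Nat.factorial k : ℚ)) := by
    rw [Nat.cast_choose ℚ (by omega : k ≤ 2 * k), show 2 * k - k = k from by omega]
  have h2 : (Nat.choose (3 * k) k : ℚ) =
      (Nat.factorial (3 * k) : ℚ) / ((Nat.factorial k : ℚ) * (Nat.factorial (2 * k) : ℚ)) := by
    rw [Nat.cast_choose ℚ (by omega : k ≤ 3 * k), show 3 * k - k = 2 * k from by omega]
  have hfk : (Nat.factorial k : ℚ) ≠ 0 := Nat.cast_ne_zero.2 (Nat.factorial_ne_zero k)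
  have hf2k : (Nat.factorial (2 * k) : ℚ) ≠ 0 := Nat.cast_ne_zero.2 (Nat.factorial_ne_zero _)
  have h27 : (27 : ℚ) ^ k ≠ 0 := by positivity
  have key := aux3 k
  set P1 := ∏ i ∈ Finset.range k, ((-1/3 : ℚ) - i) with hP1
  set P2 := ∏ i ∈ Finset.range k, ((-2/3 : ℚ) - i) with hP2
  rw [gbc, gbc, h1, h2, ← hP1, ← hP2]
  field_simp
  linear_combination key
end

section
/- For every nonnegative integer k one has C(-1/4,k) * C(-3/4,k) = C(2k,k)*C(4k,2k)/64^k, where C(x,k) denotes the generalized binomial coefficient. -/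
lemma key (k : ℕ) :
    (∏ i ∈ Finset.range k, ((-1/4 : ℚ) - i)) *
      (∏ i ∈ Finset.range k, ((-3/4 : ℚ) - i)) * 64 ^ k * (2 * k).factorial
      = (4 * k).factorial := by
  induction k with
  | zero => simp
  | succ n ih =>
    rw [Finset.prod_range_succ, Finset.prod_range_succ]
    have e2 : (2 * (n + 1)).factorial = (2*n+2) * ((2*n+1) * (2*n).factorial) := by
      have : 2 * (n + 1) = (2*n+1) + 1 := by ring
      rw [this, Nat.factorial_succ, Nat.factorial_succ]
    have e4 : (4 * (n + 1)).factorial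
        = (4*n+4) * ((4*n+3) * ((4*n+2) * ((4*n+1) * (4*n).factorial))) := by
      have : 4 * (n + 1) = (((4*n+1) + 1) + 1) + 1 := by ring
      rw [this, Nat.factorial_succ, Nat.factorial_succ, Nat.factorial_succ, Nat.factorial_succ]
    rw [e2, e4]
    push_cast
    linear_combination (((-1:ℚ)/4 - n) * (-3/4 - n) * 64 * ((2*n+2)*(2*n+1))) * ih

theorem stmt4 (k : ℕ) :
    gbc (-1/4) k * gbc (-3/4) k =
      (Nat.choose (2 * k) k) * (Nat.choose (4 * k) (2 * k)) / (64 : ℚ) ^ k := by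
  have h1 : (Nat.choose (2*k) k) * k.factorial * k.factorial = (2*k).factorial := by
    have := Nat.choose_mul_factorial_mul_factorial (n := 2*k) (k := k) (by omega)
    simpa [show 2*k - k = k by omega] using this
  have h2 : (Nat.choose (4*k) (2*k)) * (2*k).factorial * (2*k).factorial = (4*k).factorial := by
    have := Nat.choose_mul_factorial_mul_factorial (n := 4*k) (k := 2*k) (by omega)
    simpa [show 4*k - 2*k = 2*k by omega] using this
  have hk := key k
  have h1q : ((Nat.choose (2*k) k : ℚ)) * k.factorial * k.factorial = (2*k).factorial := by
    exact_mod_cast congrArg (Nat.cast : ℕ → ℚ) h1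
  have h2q : ((Nat.choose (4*k) (2*k) : ℚ)) * (2*k).factorial * (2*k).factorial = (4*k).factorial := by
    exact_mod_cast congrArg (Nat.cast : ℕ → ℚ) h2
  have hf : (k.factorial : ℚ) ≠ 0 := by positivity
  have hf2 : ((2*k).factorial : ℚ) ≠ 0 := by positivity
  have h64 : ((64:ℚ))^k ≠ 0 := by positivity
  unfold gbc
  rw [div_mul_div_comm, div_eq_div_iff (by positivity) h64]
  apply mul_right_cancel₀ hf2
  linear_combination hk - h2q
    - ((Nat.choose (4*k) (2*k) : ℚ) * ((2*k).factorial : ℚ)) * h1q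
end

section
/- For every nonnegative integer k one has C(-1/6,k) * C(-5/6,k) = C(3k,k)*C(6k,3k)/432^k, where C(x,k) denotes the generalized binomial coefficient. -/
lemma gbc_succ (x : ℚ) (k : ℕ) :
    gbc x (k+1) = gbc x k * (x - k) / (k+1) := by
  have h : ((Nat.factorial (k+1) : ℚ)) = (Nat.factorial k) * ((k:ℚ)+1) := by
    rw [Nat.factorial_succ]; push_cast; ring
  rw [gbc, gbc, Finset.prod_range_succ, h, div_mul_eq_mul_div, div_div]

lemma cast_choose_eq (n m : ℕ) (h : m ≤ n) :
    ((n.choose m : ℚ)) * (Nat.factorial m * Nat.factorial (n - m)) = Nat.factorial n := by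
  rw [← mul_assoc]
  exact_mod_cast congrArg (Nat.cast : ℕ → ℚ) (Nat.choose_mul_factorial_mul_factorial h)

lemma fact3 (n : ℕ) : (Nat.factorial (n+3) : ℚ)
    = ((n:ℚ)+3)*((n:ℚ)+2)*((n:ℚ)+1)*Nat.factorial n := by
  rw [show n+3 = (n+2)+1 from rfl, Nat.factorial_succ,
    show n+2 = (n+1)+1 from rfl, Nat.factorial_succ, Nat.factorial_succ]
  push_cast; ring

lemma fact6 (n : ℕ) : (Nat.factorial (n+6) : ℚ)
    = ((n:ℚ)+6)*((n:ℚ)+5)*((n:ℚ)+4)*((n:ℚ)+3)*((n:ℚ)+2)*((n:ℚ)+1)*Nat.factorial n := by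
  rw [show n+6 = (n+3)+3 from rfl, fact3, fact3]
  push_cast; ring

theorem stmt5 (k : ℕ) :
    gbc (-1/6) k * gbc (-5/6) k =
      (Nat.choose (3 * k) k) * (Nat.choose (6 * k) (3 * k)) / (432 : ℚ) ^ k := by
  induction k with
  | zero => simp [gbc]
  | succ k ih =>
    rw [gbc_succ, gbc_succ]
    have e3 : 3 * (k+1) = (3*k+3) := by ring
    have e6 : 6 * (k+1) = (6*k+6) := by ring
    rw [e3, e6]
    have fk : ((Nat.factorial k : ℚ)) ≠ 0 := by exact_mod_cast (Nat.factorial_pos k).ne'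
    have f2k : ((Nat.factorial (2*k) : ℚ)) ≠ 0 := by exact_mod_cast (Nat.factorial_pos _).ne'
    have f3k : ((Nat.factorial (3*k) : ℚ)) ≠ 0 := by exact_mod_cast (Nat.factorial_pos _).ne'
    -- choose ratio for C(3k+3, k+1)
    have c1 : ((3*k+3).choose (k+1) : ℚ) * (((k:ℚ)+1)*(2*(k:ℚ)+1)*(2*(k:ℚ)+2)) =
        ((3*k).choose k) * ((3*(k:ℚ)+1)*(3*(k:ℚ)+2)*(3*(k:ℚ)+3)) := by
      have h1 := cast_choose_eq (3*k+3) (k+1) (by omega)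
      have h2 := cast_choose_eq (3*k) k (by omega)
      rw [show (3*k+3) - (k+1) = (2*k)+2 from by omega] at h1
      rw [show 3*k - k = 2*k from by omega] at h2
      rw [fact3, show (2*k)+2 = (2*k+1)+1 from rfl, Nat.factorial_succ,
        show 2*k+1 = (2*k)+1 from rfl, Nat.factorial_succ, Nat.factorial_succ] at h1
      push_cast at h1 h2
      have key : (((3*k+3).choose (k+1) : ℚ) * (((k:ℚ)+1)*(2*(k:ℚ)+1)*(2*(k:ℚ)+2)))
            * (Nat.factorial k * Nat.factorial (2*k))
          = (((3*k).choose k : ℚ) * ((3*(k:ℚ)+1)*(3*(k:ℚ)+2)*(3*(k:ℚ)+3)))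
            * (Nat.factorial k * Nat.factorial (2*k)) := by
        linear_combination h1 - ((3*(k:ℚ)+1)*(3*(k:ℚ)+2)*(3*(k:ℚ)+3)) * h2
      exact mul_right_cancel₀ (mul_ne_zero fk f2k) key
    -- choose ratio for C(6k+6, 3k+3)
    have c2 : ((6*k+6).choose (3*k+3) : ℚ) * ((3*(k:ℚ)+1)*(3*(k:ℚ)+2)*(3*(k:ℚ)+3))^2 =
        ((6*k).choose (3*k)) *
          ((6*(k:ℚ)+1)*(6*(k:ℚ)+2)*(6*(k:ℚ)+3)*(6*(k:ℚ)+4)*(6*(k:ℚ)+5)*(6*(k:ℚ)+6)) := by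
      have h1 := cast_choose_eq (6*k+6) (3*k+3) (by omega)
      have h2 := cast_choose_eq (6*k) (3*k) (by omega)
      rw [show (6*k+6) - (3*k+3) = (3*k)+3 from by omega] at h1
      rw [show 6*k - 3*k = 3*k from by omega] at h2
      rw [show 6*k+6 = (6*k)+6 from rfl, fact6, show 3*k+3 = (3*k)+3 from rfl, fact3] at h1
      push_cast at h1 h2
      have key : (((6*k+6).choose (3*k+3) : ℚ) * ((3*(k:ℚ)+1)*(3*(k:ℚ)+2)*(3*(k:ℚ)+3))^2)
            * (Nat.factorial (3*k) * Nat.factorial (3*k))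
          = (((6*k).choose (3*k) : ℚ) *
              ((6*(k:ℚ)+1)*(6*(k:ℚ)+2)*(6*(k:ℚ)+3)*(6*(k:ℚ)+4)*(6*(k:ℚ)+5)*(6*(k:ℚ)+6)))
            * (Nat.factorial (3*k) * Nat.factorial (3*k)) := by
        linear_combination h1
          - ((6*(k:ℚ)+1)*(6*(k:ℚ)+2)*(6*(k:ℚ)+3)*(6*(k:ℚ)+4)*(6*(k:ℚ)+5)*(6*(k:ℚ)+6)) * h2
      exact mul_right_cancel₀ (mul_ne_zero f3k f3k) key
    have hk1 : ((k:ℚ)+1) ≠ 0 := by positivity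
    have hd1 : (((k:ℚ)+1)*(2*(k:ℚ)+1)*(2*(k:ℚ)+2)) ≠ 0 := by positivity
    have hd2 : ((3*(k:ℚ)+1)*(3*(k:ℚ)+2)*(3*(k:ℚ)+3))^2 ≠ 0 := by positivity
    have hA' : ((3*k+3).choose (k+1) : ℚ) =
        ((3*k).choose k) * ((3*(k:ℚ)+1)*(3*(k:ℚ)+2)*(3*(k:ℚ)+3))
          / (((k:ℚ)+1)*(2*(k:ℚ)+1)*(2*(k:ℚ)+2)) := by
      rw [eq_div_iff hd1]; exact c1
    have hB' : ((6*k+6).choose (3*k+3) : ℚ) =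
        ((6*k).choose (3*k)) *
          ((6*(k:ℚ)+1)*(6*(k:ℚ)+2)*(6*(k:ℚ)+3)*(6*(k:ℚ)+4)*(6*(k:ℚ)+5)*(6*(k:ℚ)+6))
          / ((3*(k:ℚ)+1)*(3*(k:ℚ)+2)*(3*(k:ℚ)+3))^2 := by
      rw [eq_div_iff hd2]; exact c2
    have h432 : ((432:ℚ))^k ≠ 0 := by positivity
    calc gbc (-1/6) k * ((-1/6:ℚ) - k) / (↑k+1) * (gbc (-5/6) k * ((-5/6:ℚ) - k) / (↑k+1))
        = (gbc (-1/6) k * gbc (-5/6) k) * (((-1/6:ℚ) - k) * ((-5/6:ℚ) - k)) / ((↑k+1)^2) := by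
          field_simp
      _ = ((Nat.choose (3*k) k : ℚ) * (Nat.choose (6*k) (3*k)) / (432:ℚ)^k)
            * (((-1/6:ℚ) - k) * ((-5/6:ℚ) - k)) / ((↑k+1)^2) := by rw [ih]
      _ = ((3*k+3).choose (k+1) : ℚ) * ((6*k+6).choose (3*k+3)) / (432:ℚ)^(k+1) := by
          rw [hA', hB']
          field_simp
          ring
end

section
/- Let p be an odd prime, n ∈ {1,…,(p-1)/2}, and t ∈ ℤ_p. Then C((p-1)/2 + pt, n) ≡ C((p-1)/2, n) * (1 - 2pt·Σ_{k=1}^n 1/(2k-1) + 2p^2 t (t·(Σ_{k=1}^n 1/(2k-1))^2 - (t+1)·Σ_{k=1}^n 1/(2k-1)^2)) (mod p^3). -/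
open scoped BigOperators

section Aux

variable {p : ℕ} [Fact p.Prime]

private lemma myNormAdd {x y : ℚ_[p]} (hx : ‖x‖ ≤ 1) (hy : ‖y‖ ≤ 1) : ‖x + y‖ ≤ 1 :=
  le_trans (Padic.nonarchimedean x y) (max_le hx hy)

private lemma myNormSub {x y : ℚ_[p]} (hx : ‖x‖ ≤ 1) (hy : ‖y‖ ≤ 1) : ‖x - y‖ ≤ 1 := by
  rw [sub_eq_add_neg]; exact myNormAdd hx (by simpa using hy)

private lemma myNormMul {x y : ℚ_[p]} (hx : ‖x‖ ≤ 1) (hy : ‖y‖ ≤ 1) : ‖x * y‖ ≤ 1 := by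
  rw [norm_mul]; exact mul_le_one₀ hx (norm_nonneg y) hy

private lemma myNormPow {x : ℚ_[p]} (hx : ‖x‖ ≤ 1) (k : ℕ) : ‖x ^ k‖ ≤ 1 := by
  rw [norm_pow]; exact pow_le_one₀ (norm_nonneg x) hx

private lemma myNormNat (n : ℕ) : ‖(n : ℚ_[p])‖ ≤ 1 := by
  have := Padic.norm_int_le_one (p := p) (n : ℤ)
  simpa using this

private lemma myNormNatOne {n : ℕ} (h : ¬ p ∣ n) : ‖(n : ℚ_[p])‖ = 1 := by
  refine le_antisymm (myNormNat n) ?_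
  by_contra hlt
  push_neg at hlt
  have h2 : ‖((n : ℤ) : ℚ_[p])‖ < 1 := by simpa using hlt
  rw [Padic.norm_intCast_lt_one_iff] at h2
  exact h (by exact_mod_cast h2)

private lemma myNormSum {s : Finset ℕ} {f : ℕ → ℚ_[p]} (h : ∀ i ∈ s, ‖f i‖ ≤ 1) :
    ‖∑ i ∈ s, f i‖ ≤ 1 := by
  induction s using Finset.cons_induction with
  | empty => simp
  | cons a s ha ih =>
    rw [Finset.sum_cons]
    exact myNormAdd (h a (Finset.mem_cons_self a s))
      (ih fun i hi => h i (Finset.mem_cons_of_mem hi))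

private lemma myNormProd {s : Finset ℕ} {f : ℕ → ℚ_[p]} (h : ∀ i ∈ s, ‖f i‖ ≤ 1) :
    ‖∏ i ∈ s, f i‖ ≤ 1 := by
  induction s using Finset.cons_induction with
  | empty => simp
  | cons a s ha ih =>
    rw [Finset.prod_cons]
    exact myNormMul (h a (Finset.mem_cons_self a s))
      (ih fun i hi => h i (Finset.mem_cons_of_mem hi))

private lemma step_id {K : Type*} [Field K] (p t S T a b : K) (hab : a * b = 1) :
    (1 - 2*p*t*S + 2*p^2*t*(t*S^2 - (t+1)*T)) * (p*(1+2*t) - a)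
      - (p - a) * (1 - 2*p*t*(S+b) + 2*p^2*t*(t*(S+b)^2 - (t+1)*(T+b^2)))
    = p^3 * (4*t^3*S^2 - 4*t^2*S*b + 2*t*b^2 - 4*t^2*(t+1)*T) := by
  linear_combination (-2*p*t + 4*p^2*t^2*S + 2*p^2*t^2*b - 2*p^2*t*(t+1)*b) * hab

private lemma key_s8 (p : ℕ) [Fact p.Prime] (t : ℚ_[p]) (ht : ‖t‖ ≤ 1) :
    ∀ m : ℕ, 2 * m ≤ p - 1 →
    ∃ c : ℚ_[p], ‖c‖ ≤ 1 ∧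
      (∏ i ∈ Finset.range m, ((p:ℚ_[p]) * (1 + 2*t) - (2*i+1)))
        - (∏ i ∈ Finset.range m, ((p:ℚ_[p]) - (2*i+1))) *
          (1 - 2*p*t*(∑ k ∈ Finset.range m, (1:ℚ_[p])/(2*k+1))
             + 2*(p:ℚ_[p])^2*t*(t*(∑ k ∈ Finset.range m, (1:ℚ_[p])/(2*k+1))^2
               - (t+1)*(∑ k ∈ Finset.range m, (1:ℚ_[p])/(2*k+1)^2)))
      = (p:ℚ_[p])^3 * c := by
  intro m
  induction m with
  | zero => exact fun _ => ⟨0, by norm_num, by simp⟩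
  | succ m ih =>
    intro hm
    obtain ⟨c, hc, heq⟩ := ih (by omega)
    have hterm : ∀ k, k < m + 1 → ‖(1:ℚ_[p])/(2*(k:ℚ_[p])+1)‖ ≤ 1 := by
      intro k hk
      have hnd : ¬ p ∣ (2*k+1) := by
        intro h
        have := Nat.le_of_dvd (by omega) h
        omega
      have h1 : ‖((2*k+1:ℕ):ℚ_[p])‖ = 1 := myNormNatOne hnd
      rw [one_div, norm_inv, show (2*(k:ℚ_[p])+1) = ((2*k+1:ℕ):ℚ_[p]) by push_cast; ring,
        h1]
      norm_num
    have hS : ‖∑ k ∈ Finset.range m, (1:ℚ_[p])/(2*k+1)‖ ≤ 1 :=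
      myNormSum fun k hk => hterm k (by have := Finset.mem_range.mp hk; omega)
    have hT : ‖∑ k ∈ Finset.range m, (1:ℚ_[p])/(2*k+1)^2‖ ≤ 1 := by
      refine myNormSum fun k hk => ?_
      rw [show (1:ℚ_[p])/(2*(k:ℚ_[p])+1)^2 = ((1:ℚ_[p])/(2*(k:ℚ_[p])+1))^2 by
        rw [div_pow, one_pow]]
      exact myNormPow (hterm k (by have := Finset.mem_range.mp hk; omega)) 2
    have hA : ‖(2*(m:ℚ_[p])+1)‖ = 1 := by
      rw [show (2*(m:ℚ_[p])+1) = ((2*m+1:ℕ):ℚ_[p]) by push_cast; ring]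
      refine myNormNatOne ?_
      intro h
      have := Nat.le_of_dvd (by omega) h
      omega
    have hA0 : (2*(m:ℚ_[p])+1) ≠ 0 := by
      intro h; rw [h] at hA; simp at hA
    have hB : ‖(2*(m:ℚ_[p])+1)⁻¹‖ ≤ 1 := by
      rw [norm_inv, hA]; norm_num
    have hstep := step_id (p:ℚ_[p]) t (∑ k ∈ Finset.range m, (1:ℚ_[p])/(2*k+1))
      (∑ k ∈ Finset.range m, (1:ℚ_[p])/(2*k+1)^2) (2*(m:ℚ_[p])+1) ((2*(m:ℚ_[p])+1)⁻¹)
      (mul_inv_cancel₀ hA0)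
    -- the new remainder
    refine ⟨c * ((p:ℚ_[p]) * (1 + 2*t) - (2*(m:ℚ_[p])+1))
      + (∏ i ∈ Finset.range m, ((p:ℚ_[p]) - (2*i+1))) *
          (4*t^3*(∑ k ∈ Finset.range m, (1:ℚ_[p])/(2*k+1))^2
            - 4*t^2*(∑ k ∈ Finset.range m, (1:ℚ_[p])/(2*k+1))*(2*(m:ℚ_[p])+1)⁻¹
            + 2*t*((2*(m:ℚ_[p])+1)⁻¹)^2
            - 4*t^2*(t+1)*(∑ k ∈ Finset.range m, (1:ℚ_[p])/(2*k+1)^2)), ?_, ?_⟩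
    · refine myNormAdd (myNormMul hc ?_) (myNormMul (myNormProd fun i hi => ?_) ?_)
      · refine myNormSub (myNormMul (myNormNat p) ?_) ?_
        · exact myNormAdd (by norm_num) (myNormMul (by simpa using myNormNat (p:=p) 2) ht)
        · exact myNormAdd (myNormMul (by simpa using myNormNat (p:=p) 2) (myNormNat m))
            (by norm_num)
      · refine myNormSub (myNormNat p) ?_
        exact myNormAdd (myNormMul (by simpa using myNormNat (p:=p) 2) (myNormNat i))
          (by norm_num)
      · refine myNormSub (myNormAdd (myNormSub ?_ ?_) ?_) ?_
        · exact myNormMul (myNormMul (by simpa using myNormNat (p:=p) 4) (myNormPow ht 3))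
            (myNormPow hS 2)
        · exact myNormMul (myNormMul (myNormMul (by simpa using myNormNat (p:=p) 4)
            (myNormPow ht 2)) hS) hB
        · exact myNormMul (myNormMul (by simpa using myNormNat (p:=p) 2) ht) (myNormPow hB 2)
        · exact myNormMul (myNormMul (myNormMul (by simpa using myNormNat (p:=p) 4)
            (myNormPow ht 2)) (myNormAdd ht (by norm_num))) hT
    · rw [Finset.prod_range_succ, Finset.prod_range_succ, Finset.sum_range_succ,
        Finset.sum_range_succ,
        show (1:ℚ_[p])/(2*(m:ℚ_[p])+1)^2 = ((2*(m:ℚ_[p])+1)⁻¹)^2 by rw [one_div, inv_pow]]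
      linear_combination ((p:ℚ_[p]) * (1 + 2*t) - (2*(m:ℚ_[p])+1)) * heq
        + (∏ i ∈ Finset.range m, ((p:ℚ_[p]) - (2*i+1))) * hstep

private lemma den_coprime {q : ℚ} (h : ‖(q : ℚ_[p])‖ ≤ 1) : ¬ p ∣ q.den := by
  intro hdvd
  have h0 : ((q * q.den : ℚ) : ℚ_[p]) = ((q.num : ℚ) : ℚ_[p]) := by
    rw [Rat.mul_den_eq_num]
  push_cast at h0
  have hden : ‖((q.den : ℤ) : ℚ_[p])‖ < 1 :=
    (Padic.norm_intCast_lt_one_iff (k := _)).mpr (by exact_mod_cast hdvd)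
  have hnum : ‖((q.num : ℤ) : ℚ_[p])‖ < 1 := by
    rw [show ((q.num : ℤ) : ℚ_[p]) = ((q.num : ℚ_[p])) by push_cast; ring, ← h0, norm_mul]
    calc ‖(q:ℚ_[p])‖ * ‖((q.den:ℕ):ℚ_[p])‖ ≤ 1 * ‖((q.den:ℕ):ℚ_[p])‖ := by
          gcongr
      _ = ‖((q.den:ℕ):ℚ_[p])‖ := one_mul _
      _ < 1 := by exact_mod_cast hden
  rw [Padic.norm_intCast_lt_one_iff] at hnum
  have h1 : p ∣ q.num.natAbs := by
    have := Int.natAbs_dvd_natAbs.mpr hnum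
    simpa using this
  have h2 : p ∣ Nat.gcd q.num.natAbs q.den := Nat.dvd_gcd h1 hdvd
  rw [q.reduced] at h2
  exact (Fact.out : p.Prime).one_lt.ne' (Nat.dvd_one.mp h2)

end Aux

/-- `a ≡ b (mod p^n)` in `ℤ_p` (rationals with denominator coprime to `p`). -/
def PadicCong (p n : ℕ) (a b : ℚ) : Prop :=
  ∃ c : ℚ, ¬ p ∣ c.den ∧ a - b = (p : ℚ) ^ n * c

theorem stmt8 (p : ℕ) (hp : p.Prime) (hodd : Odd p) (n : ℕ) (hn1 : 1 ≤ n)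
    (hn2 : n ≤ (p - 1) / 2) (t : ℚ) (ht : ¬ p ∣ t.den) :
    PadicCong p 3 (gbc (((p : ℚ) - 1) / 2 + p * t) n)
      (gbc (((p : ℚ) - 1) / 2) n *
        (1 - 2 * p * t * (∑ k ∈ Finset.range n, (1 : ℚ) / (2 * k + 1)) +
          2 * p ^ 2 * t *
            (t * (∑ k ∈ Finset.range n, (1 : ℚ) / (2 * k + 1)) ^ 2 -
              (t + 1) * ∑ k ∈ Finset.range n, (1 : ℚ) / (2 * k + 1) ^ 2))) := by
  haveI : Fact p.Prime := ⟨hp⟩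
  have hp2 : 2 ≤ p := hp.two_le
  have hpne2 : p ≠ 2 := by
    rintro rfl
    rw [Nat.odd_iff] at hodd
    omega
  have hm : 2 * n ≤ p - 1 := by omega
  have ht' : ‖(t : ℚ_[p])‖ ≤ 1 := Padic.norm_rat_le_one ht
  obtain ⟨c, hc, heq⟩ := key_s8 p (t : ℚ_[p]) ht' n hm
  -- p does not divide 2^n * n!
  have hM : ¬ p ∣ 2^n * n.factorial := by
    intro h
    rcases (Nat.Prime.dvd_mul hp).mp h with h | h
    · have h2 := hp.dvd_of_dvd_pow h
      have := Nat.le_of_dvd (by norm_num) h2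
      omega
    · have := (Nat.Prime.dvd_factorial hp).mp h
      omega
  have hMnorm : ‖((2^n * n.factorial : ℕ) : ℚ_[p])‖ = 1 := myNormNatOne hM
  have hM0 : ((2^n * n.factorial : ℕ) : ℚ_[p]) ≠ 0 := by
    intro h; rw [h] at hMnorm; simp at hMnorm
  have hp0 : (p:ℚ) ≠ 0 := Nat.cast_ne_zero.mpr hp.pos.ne'
  have hpq0 : ((p:ℚ_[p]))^3 ≠ 0 := pow_ne_zero _ (Nat.cast_ne_zero.mpr hp.pos.ne')
  have h2q : (2:ℚ_[p]) ≠ 0 := two_ne_zero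
  have hfq : ((n.factorial : ℕ) : ℚ_[p]) ≠ 0 :=
    Nat.cast_ne_zero.mpr n.factorial_ne_zero
  -- cast the two gbc's
  have prod1 : (∏ i ∈ Finset.range n, (((((p:ℚ)-1)/2 + p*t : ℚ):ℚ_[p]) - (i:ℚ_[p])))
      = (∏ i ∈ Finset.range n, ((p:ℚ_[p]) * (1 + 2*(t:ℚ_[p])) - (2*i+1))) / 2^n := by
    rw [show ((2:ℚ_[p])^n) = ∏ _i ∈ Finset.range n, (2:ℚ_[p]) by
        rw [Finset.prod_const, Finset.card_range], ← Finset.prod_div_distrib]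
    refine Finset.prod_congr rfl fun i _ => ?_
    push_cast
    field_simp
    ring
  have prod2 : (∏ i ∈ Finset.range n, ((((((p:ℚ)-1)/2 : ℚ)):ℚ_[p]) - (i:ℚ_[p])))
      = (∏ i ∈ Finset.range n, ((p:ℚ_[p]) - (2*i+1))) / 2^n := by
    rw [show ((2:ℚ_[p])^n) = ∏ _i ∈ Finset.range n, (2:ℚ_[p]) by
        rw [Finset.prod_const, Finset.card_range], ← Finset.prod_div_distrib]
    refine Finset.prod_congr rfl fun i _ => ?_
    push_cast
    field_simp
    ring
  have hcast1 : ((gbc (((p:ℚ)-1)/2 + p*t) n : ℚ) : ℚ_[p])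
      = (∏ i ∈ Finset.range n, ((p:ℚ_[p]) * (1 + 2*(t:ℚ_[p])) - (2*i+1)))
        / ((2:ℚ_[p])^n * (n.factorial : ℚ_[p])) := by
    rw [gbc, Rat.cast_div, Rat.cast_prod]
    simp only [Rat.cast_sub, Rat.cast_natCast]
    rw [prod1, div_div]
  have hcast2 : ((gbc (((p:ℚ)-1)/2) n : ℚ) : ℚ_[p])
      = (∏ i ∈ Finset.range n, ((p:ℚ_[p]) - (2*i+1)))
        / ((2:ℚ_[p])^n * (n.factorial : ℚ_[p])) := by
    rw [gbc, Rat.cast_div, Rat.cast_prod]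
    simp only [Rat.cast_sub, Rat.cast_natCast]
    rw [prod2, div_div]
  have hcastG : (((1 - 2 * (p:ℚ) * t * (∑ k ∈ Finset.range n, (1 : ℚ) / (2 * k + 1)) +
        2 * (p:ℚ) ^ 2 * t * (t * (∑ k ∈ Finset.range n, (1 : ℚ) / (2 * k + 1)) ^ 2 -
          (t + 1) * ∑ k ∈ Finset.range n, (1 : ℚ) / (2 * k + 1) ^ 2) : ℚ)) : ℚ_[p])
      = 1 - 2*(p:ℚ_[p])*(t:ℚ_[p])*(∑ k ∈ Finset.range n, (1:ℚ_[p])/(2*k+1))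
          + 2*(p:ℚ_[p])^2*(t:ℚ_[p])*((t:ℚ_[p])*(∑ k ∈ Finset.range n, (1:ℚ_[p])/(2*k+1))^2
            - ((t:ℚ_[p])+1)*(∑ k ∈ Finset.range n, (1:ℚ_[p])/(2*k+1)^2)) := by
    push_cast
    ring
  -- the key cast identity
  have key2 : ((gbc (((p : ℚ) - 1) / 2 + p * t) n
      - gbc (((p : ℚ) - 1) / 2) n *
        (1 - 2 * p * t * (∑ k ∈ Finset.range n, (1 : ℚ) / (2 * k + 1)) +
          2 * p ^ 2 * t *
            (t * (∑ k ∈ Finset.range n, (1 : ℚ) / (2 * k + 1)) ^ 2 -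
              (t + 1) * ∑ k ∈ Finset.range n, (1 : ℚ) / (2 * k + 1) ^ 2)) : ℚ) : ℚ_[p])
      = (p:ℚ_[p])^3 * (c / ((2^n * n.factorial : ℕ) : ℚ_[p])) := by
    rw [Rat.cast_sub, Rat.cast_mul, hcast1, hcast2, hcastG,
      Nat.cast_mul, Nat.cast_pow, Nat.cast_ofNat,
      div_mul_eq_mul_div, div_sub_div_same, heq, mul_div_assoc]
  have hcnorm : ‖c / ((2^n * n.factorial : ℕ) : ℚ_[p])‖ ≤ 1 := by
    rw [norm_div, hMnorm, div_one]
    exact hc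
  -- produce the rational witness
  refine ⟨(gbc (((p : ℚ) - 1) / 2 + p * t) n
      - gbc (((p : ℚ) - 1) / 2) n *
        (1 - 2 * p * t * (∑ k ∈ Finset.range n, (1 : ℚ) / (2 * k + 1)) +
          2 * p ^ 2 * t *
            (t * (∑ k ∈ Finset.range n, (1 : ℚ) / (2 * k + 1)) ^ 2 -
              (t + 1) * ∑ k ∈ Finset.range n, (1 : ℚ) / (2 * k + 1) ^ 2))) / (p:ℚ)^3,
    ?_, by field_simp⟩
  apply den_coprime (p := p)
  rw [Rat.cast_div, key2]
  rw [show (((p:ℚ)^3 : ℚ) : ℚ_[p]) = (p:ℚ_[p])^3 by push_cast; ring]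
  rw [mul_div_cancel_left₀ _ hpq0]
  exact hcnorm
end

section
/- Let p be an odd prime, a ∈ ℤ_p with a ≢ 0, -1 (mod p), and a' = (a - ⟨a⟩_p)/p. Then C(a, p-1)·C(-1-a, p-1)·C(2(p-1), p-1) / (4^{p-1}·p) ≡ -a'(a'+1)/(a(a+1)) · p^2 (mod p^3). -/
open Finset
open scoped Nat

lemma padicCong_mk (p n : ℕ) (hp : p.Prime) (x y : ℚ) (E F : ℤ)
    (hF : ¬ (p:ℤ) ∣ F) (h : x - y = (p:ℚ)^n * E / F) :
    PadicCong p n x y := by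
  refine ⟨(E:ℚ)/(F:ℚ), ?_, by rw [h]; ring⟩
  intro hd
  have h1 : (((E:ℚ)/(F:ℚ)).den : ℤ) ∣ F := by
    rw [← Rat.divInt_eq_div]; exact_mod_cast Rat.den_dvd E F
  exact hF (dvd_trans (Int.natCast_dvd_natCast.mpr hd) h1)

lemma prod_univ_erase_zero (p : ℕ) [Fact p.Prime] :
    ∏ x ∈ Finset.univ.erase (0 : ZMod p), x = -1 := by
  have hp : p.Prime := Fact.out
  have hp1 : 1 < p := hp.one_lt
  have hinj : ∀ i ∈ Finset.Ico 1 p, ∀ j ∈ Finset.Ico 1 p,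
      (i : ZMod p) = (j : ZMod p) → i = j := by
    intro i hi j hj hij
    simp only [mem_Ico] at hi hj
    have h1 := ZMod.val_cast_of_lt (n := p) hi.2
    have h2 := ZMod.val_cast_of_lt (n := p) hj.2
    rw [← h1, ← h2, hij]
  have himg : (Finset.Ico 1 p).image (Nat.cast : ℕ → ZMod p) = Finset.univ.erase 0 := by
    apply Finset.eq_of_subset_of_card_le
    · intro x hx
      simp only [Finset.mem_image, mem_Ico] at hx
      obtain ⟨i, hi, rfl⟩ := hx
      refine Finset.mem_erase.mpr ⟨?_, Finset.mem_univ _⟩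
      rw [Ne, ZMod.natCast_eq_zero_iff]
      exact fun hd => absurd (Nat.le_of_dvd (by omega) hd) (by omega)
    · rw [Finset.card_erase_of_mem (Finset.mem_univ _), Finset.card_univ, ZMod.card,
        Finset.card_image_of_injOn (fun i hi j hj => hinj i hi j hj), Nat.card_Ico]
  rw [← himg, Finset.prod_image hinj]
  exact ZMod.prod_Ico_one_prime p

lemma prod_erase_mul (p : ℕ) [Fact p.Prime] (g : ℕ → ZMod p) (t : ℕ)
    (ht : t ∈ Finset.range (p-1)) (hgt : g t = 0)
    (hinj : ∀ i ∈ Finset.range (p-1), ∀ j ∈ Finset.range (p-1), g i = g j → i = j)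
    (w : ZMod p) (hw : w ≠ 0) (hmiss : ∀ i ∈ Finset.range (p-1), g i ≠ w) :
    (∏ i ∈ (Finset.range (p-1)).erase t, g i) * w = -1 := by
  have hp : p.Prime := Fact.out
  have hp1 : 1 < p := hp.one_lt
  have hinj' : ∀ i ∈ (Finset.range (p-1)).erase t, ∀ j ∈ (Finset.range (p-1)).erase t,
      g i = g j → i = j := fun i hi j hj h =>
    hinj i (Finset.mem_of_mem_erase hi) j (Finset.mem_of_mem_erase hj) h
  have himg : ((Finset.range (p-1)).erase t).image g = (Finset.univ.erase w).erase 0 := by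
    apply Finset.eq_of_subset_of_card_le
    · intro x hx
      simp only [Finset.mem_image] at hx
      obtain ⟨i, hi, rfl⟩ := hx
      have hi' := Finset.mem_of_mem_erase hi
      refine Finset.mem_erase.mpr ⟨?_, Finset.mem_erase.mpr ⟨hmiss i hi', Finset.mem_univ _⟩⟩
      intro h0
      exact (Finset.mem_erase.mp hi).1 (hinj i hi' t ht (h0.trans hgt.symm))
    · rw [Finset.card_erase_of_mem (Finset.mem_erase.mpr ⟨fun h => hw h.symm, Finset.mem_univ _⟩),
        Finset.card_erase_of_mem (Finset.mem_univ _), Finset.card_univ, ZMod.card,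
        Finset.card_image_of_injOn (fun i hi j hj => hinj' i hi j hj),
        Finset.card_erase_of_mem ht, Finset.card_range]
  have h2 : (∏ i ∈ (Finset.range (p-1)).erase t, g i)
      = ∏ x ∈ (Finset.univ.erase w).erase 0, x := by
    rw [← himg, Finset.prod_image hinj']
  rw [h2, Finset.erase_right_comm]
  have hw0 : w ∈ Finset.univ.erase (0:ZMod p) := Finset.mem_erase.mpr ⟨hw, Finset.mem_univ _⟩
  rw [mul_comm]
  rw [Finset.mul_prod_erase _ (fun x => x) hw0]
  exact prod_univ_erase_zero p

theorem stmt10 (p : ℕ) (hp : p.Prime) (hodd : Odd p) (a : ℚ) (ha : ¬ p ∣ a.den)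
    (h0 : ¬ PadicCong p 1 a 0) (h1 : ¬ PadicCong p 1 a (-1))
    (r : ℕ) (hr : r < p) (har : PadicCong p 1 a r) :
    PadicCong p 3
      (gbc a (p - 1) * gbc (-1 - a) (p - 1) * (Nat.choose (2 * (p - 1)) (p - 1)) /
        (4 ^ (p - 1) * p))
      (-((a - r) / p * ((a - r) / p + 1)) / (a * (a + 1)) * p ^ 2) := by
  haveI : Fact p.Prime := ⟨hp⟩
  have hp3 : 3 ≤ p := by
    obtain ⟨m, hm⟩ := hodd
    have := hp.two_le
    omega
  have hpQ : (p:ℚ) ≠ 0 := Nat.cast_ne_zero.mpr (by omega)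
  obtain ⟨c, hcden, hac⟩ := har
  rw [pow_one] at hac
  -- names for numerators/denominators
  set u : ℤ := a.num with hu_def
  set v : ℤ := (a.den : ℤ) with hv_def
  set e : ℤ := c.num with he_def
  set f : ℤ := (c.den : ℤ) with hf_def
  have hvd : ¬ (p:ℤ) ∣ v := fun h => ha (Int.natCast_dvd_natCast.mp h)
  have hfd : ¬ (p:ℤ) ∣ f := fun h => hcden (Int.natCast_dvd_natCast.mp h)
  have hv0 : (v:ℚ) ≠ 0 := by
    simp [hv_def, a.den_nz]
  have hf0 : (f:ℚ) ≠ 0 := by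
    simp [hf_def, c.den_nz]
  have hav : a = (u:ℚ)/(v:ℚ) := by
    rw [hu_def, hv_def]; push_cast; exact (Rat.num_div_den a).symm
  have hcf : c = (e:ℚ)/(f:ℚ) := by
    rw [he_def, hf_def]; push_cast; exact (Rat.num_div_den c).symm
  -- r bounds
  have hr0 : r ≠ 0 := by
    intro h
    apply h0
    apply padicCong_mk p 1 hp _ _ e f hfd
    rw [pow_one, sub_zero]
    rw [h] at hac; rw [hcf] at hac
    push_cast at hac
    field_simp at hac ⊢
    linarith [hac]
  have hrp1 : r ≠ p - 1 := by
    intro h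
    apply h1
    apply padicCong_mk p 1 hp _ _ (e + f) f hfd
    rw [pow_one]
    have hre : (r:ℚ) = (p:ℚ) - 1 := by
      rw [h]; push_cast [Nat.cast_sub (by omega : 1 ≤ p)]; ring
    rw [hre] at hac
    rw [hcf] at hac
    field_simp at hac ⊢
    push_cast; linear_combination hac
  have hrlt : r < p - 1 := by omega
  have hr1 : 1 ≤ r := by omega
  -- a not ≡ 0, -1 mod p at integer level
  have hu : ¬ (p:ℤ) ∣ u := by
    rintro ⟨m, hm⟩
    apply h0
    apply padicCong_mk p 1 hp _ _ m v hvd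
    rw [pow_one, sub_zero, hav, hm]
    push_cast
    field_simp
  have huv : ¬ (p:ℤ) ∣ (u + v) := by
    rintro ⟨m, hm⟩
    apply h1
    apply padicCong_mk p 1 hp _ _ m v hvd
    rw [pow_one, hav]
    have : (u:ℚ) + v = p * m := by exact_mod_cast congrArg (Int.cast : ℤ → ℚ) hm
    field_simp
    linarith [this]
  have hu0 : (u:ℚ) ≠ 0 := fun h => hu (by simp [show u = 0 from by exact_mod_cast h])
  have huv0 : (u:ℚ) + (v:ℚ) ≠ 0 := by
    intro h
    apply huv
    have : u + v = 0 := by exact_mod_cast h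
    simp [this]
  -- residue facts in ZMod p
  have hfz : ((f:ℤ) : ZMod p) ≠ 0 := by
    rw [Ne, ZMod.intCast_zmod_eq_zero_iff_dvd]; exact hfd
  have hvz : ((v:ℤ) : ZMod p) ≠ 0 := by
    rw [Ne, ZMod.intCast_zmod_eq_zero_iff_dvd]; exact hvd
  have hrv : ((u:ℤ) : ZMod p) = (r : ZMod p) * ((v:ℤ) : ZMod p) := by
    have hZ : u * f = r * (v * f) + p * (e * v) := by
      have hq : (u:ℚ) * f = r * (v * f) + p * (e * v) := by
        rw [hav, hcf] at hac
        field_simp at hac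
        push_cast
        linarith [hac]
      exact_mod_cast hq
    have h2 := congrArg (Int.cast : ℤ → ZMod p) hZ
    push_cast [ZMod.natCast_self] at h2
    apply mul_right_cancel₀ hfz
    linear_combination h2
  -- the quotient k of the central binomial coefficient by p
  have hchoose : p ∣ Nat.choose (2*(p-1)) (p-1) := by
    rw [two_mul]
    exact hp.dvd_choose_add (by omega) (by omega) (by omega)
  obtain ⟨k, hCk⟩ := hchoose
  have hkfac : k * (p-1)! = ∏ i ∈ Finset.Ico (p+1) (2*p-1), i := by
    have hh1 : Nat.choose (2*(p-1)) (p-1) * (p-1)! * (p-1)! = (2*(p-1))! := by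
      have := Nat.choose_mul_factorial_mul_factorial (show p - 1 ≤ 2*(p-1) by omega)
      rwa [show 2*(p-1) - (p-1) = p-1 by omega] at this
    have hh2 : (∏ i ∈ Finset.Ico 1 p, i) * (∏ i ∈ Finset.Ico p (2*p-1), i)
        = ∏ i ∈ Finset.Ico 1 (2*p-1), i :=
      Finset.prod_Ico_consecutive _ (by omega) (by omega)
    have hh3 : ∏ i ∈ Finset.Ico 1 (2*p-1), i = (2*(p-1))! := by
      have := Finset.prod_Ico_id_eq_factorial (2*(p-1))
      rw [show 2*(p-1)+1 = 2*p-1 by omega] at this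
      exact this
    have hh4 : ∏ i ∈ Finset.Ico 1 p, i = (p-1)! := by
      have := Finset.prod_Ico_id_eq_factorial (p-1)
      rw [show (p-1)+1 = p by omega] at this
      exact this
    have hh5 : ∏ i ∈ Finset.Ico p (2*p-1), i
        = p * ∏ i ∈ Finset.Ico (p+1) (2*p-1), i := by
      rw [← Finset.mul_prod_erase _ _ (Finset.mem_Ico.mpr ⟨le_refl p, by omega⟩),
        Finset.Ico_erase_left, ← Finset.Ico_add_one_left_eq_Ioo]
    have hh6 : p * ((k * (p-1)!) * (p-1)!)
        = p * ((∏ i ∈ Finset.Ico (p+1) (2*p-1), i) * (p-1)!) := by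
      calc p * ((k * (p-1)!) * (p-1)!)
          = (Nat.choose (2*(p-1)) (p-1)) * (p-1)! * (p-1)! := by rw [hCk]; ring
        _ = (2*(p-1))! := hh1
        _ = ∏ i ∈ Finset.Ico 1 (2*p-1), i := hh3.symm
        _ = (p-1)! * (p * ∏ i ∈ Finset.Ico (p+1) (2*p-1), i) := by rw [← hh2, hh4, hh5]
        _ = p * ((∏ i ∈ Finset.Ico (p+1) (2*p-1), i) * (p-1)!) := by ring
    have hh7 := Nat.eq_of_mul_eq_mul_left (show 0 < p by omega) hh6
    exact Nat.eq_of_mul_eq_mul_right (Nat.factorial_pos _) hh7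
  have hpm1 : (((p-1:ℕ)) : ZMod p) = -1 := by
    push_cast [Nat.cast_sub (by omega : 1 ≤ p), ZMod.natCast_self]
    ring
  have hfac2 : (((p-2)! : ℕ) : ZMod p) = 1 := by
    have hw := ZMod.wilsons_lemma (p := p)
    have hsplit : (p-1)! = (p-1) * (p-2)! := by
      rw [show p - 1 = (p-2)+1 by omega, Nat.factorial_succ]
    rw [hsplit] at hw
    push_cast at hw
    rw [hpm1] at hw
    linear_combination -hw
  have hk : ((k:ℕ) : ZMod p) = -1 := by
    have h8 := congrArg (Nat.cast : ℕ → ZMod p) hkfac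
    push_cast at h8
    rw [ZMod.wilsons_lemma] at h8
    have h9 : (∏ i ∈ Finset.Ico (p+1) (2*p-1), (i:ZMod p)) = (((p-2)! : ℕ) : ZMod p) := by
      rw [Finset.prod_Ico_eq_prod_range]
      rw [show 2*p-1-(p+1) = p-2 by omega]
      rw [← Finset.prod_range_add_one_eq_factorial (p-2), Nat.cast_prod]
      apply Finset.prod_congr rfl
      intro j hj
      push_cast [ZMod.natCast_self]
      ring
    rw [h9, hfac2] at h8
    linear_combination -h8
  -- injectivity of ℕ-cast on range (p-1)
  have hnatinj : ∀ i ∈ Finset.range (p-1), ∀ j ∈ Finset.range (p-1),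
      (i : ZMod p) = (j : ZMod p) → i = j := by
    intro i hi j hj hij
    rw [Finset.mem_range] at hi hj
    have hc1 := ZMod.val_cast_of_lt (n := p) (by omega : i < p)
    have hc2 := ZMod.val_cast_of_lt (n := p) (by omega : j < p)
    rw [← hc1, ← hc2, hij]
  have hne1 : ∀ i ∈ Finset.range (p-1), (i : ZMod p) ≠ -1 := by
    intro i hi h
    rw [Finset.mem_range] at hi
    rw [← hpm1] at h
    have hc1 := ZMod.val_cast_of_lt (n := p) (by omega : i < p)
    have hc2 := ZMod.val_cast_of_lt (n := p) (by omega : p-1 < p)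
    rw [h] at hc1
    omega
  have hrz : ((r:ℕ) : ZMod p) ≠ 0 := by
    rw [Ne, ZMod.natCast_eq_zero_iff]
    intro hd
    exact absurd (Nat.le_of_dvd (by omega) hd) (by omega)
  have hr1z : ((r:ℕ) : ZMod p) + 1 ≠ 0 := by
    have hcast : ((r:ℕ) : ZMod p) + 1 = ((r+1 : ℕ) : ZMod p) := by push_cast; ring
    rw [hcast, Ne, ZMod.natCast_eq_zero_iff]
    intro hd
    exact absurd (Nat.le_of_dvd (by omega) hd) (by omega)
  have hrmem : r ∈ Finset.range (p-1) := Finset.mem_range.mpr hrlt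
  have hsmem : (p-1-r) ∈ Finset.range (p-1) := Finset.mem_range.mpr (by omega)
  have hA : (∏ i ∈ (Finset.range (p-1)).erase r, ((r:ZMod p) - (i:ZMod p)))
      * ((r:ZMod p)+1) = -1 := by
    apply prod_erase_mul p (fun i => (r:ZMod p) - (i:ZMod p)) r hrmem (by simp)
    · intro i hi j hj h
      exact hnatinj i hi j hj (by linear_combination -h)
    · exact hr1z
    · intro i hi h
      exact hne1 i hi (by linear_combination -h)
  have hsval : (((p-1-r:ℕ)) : ZMod p) = -1 - (r:ZMod p) := by
    push_cast [Nat.cast_sub (by omega : r ≤ p-1), Nat.cast_sub (by omega : 1 ≤ p),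
      ZMod.natCast_self]
    ring
  have hB : (∏ i ∈ (Finset.range (p-1)).erase (p-1-r), (-1 - (r:ZMod p) - (i:ZMod p)))
      * (-(r:ZMod p)) = -1 := by
    apply prod_erase_mul p (fun i => -1 - (r:ZMod p) - (i:ZMod p)) (p-1-r) hsmem
      (by show -1 - (r:ZMod p) - ((p-1-r : ℕ):ZMod p) = 0; rw [hsval]; ring)
    · intro i hi j hj h
      exact hnatinj i hi j hj (by linear_combination -h)
    · simpa using hrz
    · intro i hi h
      exact hne1 i hi (by linear_combination -h)
  -- integer products mod p
  have hcardE1 : ((Finset.range (p-1)).erase r).card = p - 2 := by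
    rw [Finset.card_erase_of_mem hrmem, Finset.card_range]; omega
  have hcardE2 : ((Finset.range (p-1)).erase (p-1-r)).card = p - 2 := by
    rw [Finset.card_erase_of_mem hsmem, Finset.card_range]; omega
  have hG1z : (∏ i ∈ (Finset.range (p-1)).erase r, ((u:ZMod p) - (i:ZMod p)*((v:ℤ):ZMod p)))
      = (((v:ℤ):ZMod p))^(p-2)
        * (∏ i ∈ (Finset.range (p-1)).erase r, ((r:ZMod p) - (i:ZMod p))) := by
    calc (∏ i ∈ (Finset.range (p-1)).erase r, ((u:ZMod p) - (i:ZMod p)*((v:ℤ):ZMod p)))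
        = ∏ i ∈ (Finset.range (p-1)).erase r,
            (((v:ℤ):ZMod p) * ((r:ZMod p) - (i:ZMod p))) :=
          Finset.prod_congr rfl (fun i _ => by rw [hrv]; ring)
      _ = _ := by rw [Finset.prod_mul_distrib, Finset.prod_const, hcardE1]
  have hG2z : (∏ i ∈ (Finset.range (p-1)).erase (p-1-r),
        (-((v:ℤ):ZMod p) - (u:ZMod p) - (i:ZMod p)*((v:ℤ):ZMod p)))
      = (((v:ℤ):ZMod p))^(p-2)
        * (∏ i ∈ (Finset.range (p-1)).erase (p-1-r), (-1 - (r:ZMod p) - (i:ZMod p))) := by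
    calc (∏ i ∈ (Finset.range (p-1)).erase (p-1-r),
          (-((v:ℤ):ZMod p) - (u:ZMod p) - (i:ZMod p)*((v:ℤ):ZMod p)))
        = ∏ i ∈ (Finset.range (p-1)).erase (p-1-r),
            (((v:ℤ):ZMod p) * (-1 - (r:ZMod p) - (i:ZMod p))) :=
          Finset.prod_congr rfl (fun i _ => by rw [hrv]; ring)
      _ = _ := by rw [Finset.prod_mul_distrib, Finset.prod_const, hcardE2]
  have h4f : ((4:ZMod p))^(p-1) = 1 := by
    apply ZMod.pow_card_sub_one_eq_one
    intro h40
    have h41 : ((4:ℕ) : ZMod p) = 0 := by exact_mod_cast h40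
    rw [ZMod.natCast_eq_zero_iff] at h41
    have h42 : p ∣ 2 := hp.dvd_of_dvd_pow (n := 2) (by norm_num; exact h41)
    have := Nat.le_of_dvd (by norm_num) h42
    omega
  have hABk : (∏ i ∈ (Finset.range (p-1)).erase r, ((r:ZMod p) - (i:ZMod p)))
      * (∏ i ∈ (Finset.range (p-1)).erase (p-1-r), (-1 - (r:ZMod p) - (i:ZMod p)))
      * ((k:ℕ):ZMod p) * (r:ZMod p) * ((r:ZMod p)+1) = 1 := by
    rw [hk]
    linear_combination (-((∏ i ∈ (Finset.range (p-1)).erase (p-1-r),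
      (-1 - (r:ZMod p) - (i:ZMod p))) * (r:ZMod p))) * hA - hB
  have hpN : (p:ℤ) ∣ ((∏ i ∈ (Finset.range (p-1)).erase r, (u - (i:ℤ)*v))
      * (∏ i ∈ (Finset.range (p-1)).erase (p-1-r), (-v - u - (i:ℤ)*v))
      * (k:ℤ) * u * (u+v) - ((p-1)! : ℤ)^2 * 4^(p-1) * (((v^(p-2))^2)*v^2)) := by
    rw [← ZMod.intCast_zmod_eq_zero_iff_dvd]
    push_cast
    rw [hG1z, hG2z, hrv, ZMod.wilsons_lemma, h4f]
    linear_combination ((((v:ℤ):ZMod p))^(p-2))^2 * (((v:ℤ):ZMod p))^2 * hABk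
  obtain ⟨M, hNM⟩ := hpN
  -- ℚ-side decompositions
  have hprod1 : (∏ i ∈ Finset.range (p-1), (a - (i:ℚ)))
      = (p * c) * ∏ i ∈ (Finset.range (p-1)).erase r, (a - (i:ℚ)) := by
    rw [← Finset.mul_prod_erase _ _ hrmem, hac]
  have hcast_s : ((p-1-r : ℕ) : ℚ) = (p:ℚ) - 1 - r := by
    push_cast [Nat.cast_sub (show r ≤ p-1 by omega), Nat.cast_sub (show 1 ≤ p by omega)]
    ring
  have hprod2 : (∏ i ∈ Finset.range (p-1), (-1 - a - (i:ℚ)))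
      = (-(p * (c+1))) * ∏ i ∈ (Finset.range (p-1)).erase (p-1-r), (-1 - a - (i:ℚ)) := by
    rw [← Finset.mul_prod_erase _ _ hsmem]
    congr 1
    rw [hcast_s]
    linear_combination -hac
  have hQ1 : (∏ i ∈ (Finset.range (p-1)).erase r, (a - (i:ℚ)))
      = ((∏ i ∈ (Finset.range (p-1)).erase r, (u - (i:ℤ)*v) : ℤ) : ℚ) / ((v:ℤ):ℚ)^(p-2) := by
    rw [eq_div_iff (pow_ne_zero _ hv0)]
    calc (∏ i ∈ (Finset.range (p-1)).erase r, (a - (i:ℚ))) * ((v:ℤ):ℚ)^(p-2)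
        = ∏ i ∈ (Finset.range (p-1)).erase r, ((a - (i:ℚ)) * ((v:ℤ):ℚ)) := by
          rw [Finset.prod_mul_distrib, Finset.prod_const, hcardE1]
      _ = ∏ i ∈ (Finset.range (p-1)).erase r, (((u:ℤ):ℚ) - (i:ℚ)*((v:ℤ):ℚ)) := by
          apply Finset.prod_congr rfl
          intro i hi
          rw [hav]
          field_simp
      _ = _ := by push_cast; ring
  have hQ2 : (∏ i ∈ (Finset.range (p-1)).erase (p-1-r), (-1 - a - (i:ℚ)))
      = ((∏ i ∈ (Finset.range (p-1)).erase (p-1-r), (-v - u - (i:ℤ)*v) : ℤ) : ℚ)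
        / ((v:ℤ):ℚ)^(p-2) := by
    rw [eq_div_iff (pow_ne_zero _ hv0)]
    calc (∏ i ∈ (Finset.range (p-1)).erase (p-1-r), (-1 - a - (i:ℚ))) * ((v:ℤ):ℚ)^(p-2)
        = ∏ i ∈ (Finset.range (p-1)).erase (p-1-r), ((-1 - a - (i:ℚ)) * ((v:ℤ):ℚ)) := by
          rw [Finset.prod_mul_distrib, Finset.prod_const, hcardE2]
      _ = ∏ i ∈ (Finset.range (p-1)).erase (p-1-r),
            (-((v:ℤ):ℚ) - ((u:ℤ):ℚ) - (i:ℚ)*((v:ℤ):ℚ)) := by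
          apply Finset.prod_congr rfl
          intro i hi
          rw [hav]
          field_simp
      _ = _ := by push_cast; ring
  have hCQ : ((Nat.choose (2*(p-1)) (p-1) : ℕ) : ℚ) = (p:ℚ) * (k:ℚ) := by
    exact_mod_cast congrArg (Nat.cast : ℕ → ℚ) hCk
  have hcq : (a - (r:ℚ))/(p:ℚ) = c := by
    rw [hac, mul_div_cancel_left₀ _ hpQ]
  have hNQ := congrArg (Int.cast : ℤ → ℚ) hNM
  push_cast at hNQ
  have hfacQ : (((p-1)! : ℕ):ℚ) ≠ 0 := Nat.cast_ne_zero.mpr (Nat.factorial_ne_zero _)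
  have h4Q : ((4:ℚ))^(p-1) ≠ 0 := pow_ne_zero _ (by norm_num)
  have hvpQ : ((v:ℤ):ℚ)^(p-2) ≠ 0 := pow_ne_zero _ hv0
  have step1 : gbc a (p - 1) * gbc (-1 - a) (p - 1)
        * ((2 * (p - 1)).choose (p - 1) : ℚ) / (4 ^ (p - 1) * (p:ℚ))
      = (-((p:ℚ)^2 * ((e:ℤ):ℚ) * (((e:ℤ):ℚ)+((f:ℤ):ℚ))
            * ((∏ i ∈ (Finset.range (p-1)).erase r, (u - (i:ℤ)*v) : ℤ) : ℚ)
            * ((∏ i ∈ (Finset.range (p-1)).erase (p-1-r), (-v - u - (i:ℤ)*v) : ℤ) : ℚ)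
            * (k:ℚ)))
        / (((f:ℤ):ℚ)^2 * (((p-1)! : ℕ):ℚ)^2 * 4^(p-1) * (((v:ℤ):ℚ)^(p-2))^2) := by
    simp only [gbc]
    rw [hprod1, hprod2, hQ1, hQ2, hcf]
    rw [show ((2 * (p - 1)).choose (p - 1) : ℚ) = (p:ℚ) * (k:ℚ) from hCQ]
    field_simp
  have step2 : -(c * (c + 1)) / (a * (a + 1)) * (p:ℚ) ^ 2
      = (-((p:ℚ)^2 * ((e:ℤ):ℚ) * (((e:ℤ):ℚ)+((f:ℤ):ℚ)) * ((v:ℤ):ℚ)^2))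
        / (((f:ℤ):ℚ)^2 * (((u:ℤ):ℚ) * (((u:ℤ):ℚ)+((v:ℤ):ℚ)))) := by
    rw [hcf, hav]
    have ha0 : (u:ℚ)/(v:ℚ) ≠ 0 := div_ne_zero hu0 hv0
    field_simp
  -- final assembly
  apply padicCong_mk p 3 hp _ _ (-(e*(e+f)*M))
    (f^2 * (((p-1)! : ℤ)^2 * 4^(p-1)) * u * (u+v) * (v^(p-2))^2)
  · -- denominator not divisible by p
    have hpzp : Prime (p:ℤ) := Nat.prime_iff_prime_int.mp hp
    intro hdvd
    have hfacZ : ¬ (p:ℤ) ∣ ((p-1)! : ℤ) := by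
      rw [Int.natCast_dvd_natCast, hp.dvd_factorial]
      omega
    have h4Z : ¬ (p:ℤ) ∣ (4:ℤ) := by
      intro hd
      have hd' : p ∣ 4 := by exact_mod_cast hd
      have h42 : p ∣ 2 := hp.dvd_of_dvd_pow (n := 2) (by norm_num; exact hd')
      have := Nat.le_of_dvd (by norm_num) h42
      omega
    rcases hpzp.dvd_mul.mp hdvd with hd | hd
    · rcases hpzp.dvd_mul.mp hd with hd | hd
      · rcases hpzp.dvd_mul.mp hd with hd | hd
        · rcases hpzp.dvd_mul.mp hd with hd | hd
          · exact hfd (hpzp.dvd_of_dvd_pow hd)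
          · rcases hpzp.dvd_mul.mp hd with hd | hd
            · exact hfacZ (hpzp.dvd_of_dvd_pow hd)
            · exact h4Z (hpzp.dvd_of_dvd_pow hd)
        · exact hu hd
      · exact huv hd
    · exact hvd (hpzp.dvd_of_dvd_pow (hpzp.dvd_of_dvd_pow hd))
  · -- the rational identity
    rw [hcq, step1, step2]
    rw [div_sub_div _ _
      (by positivity : (((f:ℤ):ℚ)^2 * (((p-1)! : ℕ):ℚ)^2 * 4^(p-1) * (((v:ℤ):ℚ)^(p-2))^2) ≠ 0)
      (mul_ne_zero (pow_ne_zero 2 hf0) (mul_ne_zero hu0 huv0))]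
    rw [div_eq_div_iff
      (mul_ne_zero
        (by positivity : (((f:ℤ):ℚ)^2 * (((p-1)! : ℕ):ℚ)^2 * 4^(p-1) * (((v:ℤ):ℚ)^(p-2))^2) ≠ 0)
        (mul_ne_zero (pow_ne_zero 2 hf0) (mul_ne_zero hu0 huv0)))
      (by
        push_cast
        exact mul_ne_zero (mul_ne_zero (mul_ne_zero (mul_ne_zero (pow_ne_zero 2 hf0)
          (mul_ne_zero (pow_ne_zero 2 hfacQ) h4Q)) hu0) huv0) (pow_ne_zero 2 hvpQ))]
    push_cast
    linear_combination (-((p:ℚ)^2) * ((e:ℤ):ℚ) * (((e:ℤ):ℚ)+((f:ℤ):ℚ)) * ((f:ℤ):ℚ)^2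
      * (((f:ℤ):ℚ)^2 * (((p-1)! : ℕ):ℚ)^2 * 4^(p-1) * ((u:ℤ):ℚ) * (((u:ℤ):ℚ)+((v:ℤ):ℚ))
        * (((v:ℤ):ℚ)^(p-2))^2)) * hNQ
end
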